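/- (1-D Maximal Selection Principle.) For every f ∈ H²(𝔻) there exists a₁ ∈ 𝔻 such that (1−|a₁|²)|f(a₁)|² = sup { (1−|a|²)|f(a)|² : a ∈ 𝔻 }; equivalently, |⟨f, e_a⟩|² attains its supremum over a ∈ 𝔻. -/

import Mathlib

open MeasureTheory Real Complex Filter
open scoped ENNReal NNReal Topology

noncomputable section

/-- The point `e^{it}` on the unit circle. -/
def bp (t : ℝ) : ℂ := Complex.exp (Complex.I * t)

/-- The normalized Szegő kernel. -/
def szego (a z : ℂ) : ℂ := (Real.sqrt (1 - ‖a‖ ^ 2) : ℂ) / (1 - (starRingEnd ℂ) a * z)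

/-- Membership in the Hardy space `H²(𝔻)`: `F` is holomorphic on the unit disc and its
circle means `(1/2π)∫₀^{2π} ‖F(r e^{it})‖² dt`, `0 ≤ r < 1`, are uniformly bounded. -/
def IsH2D (F : ℂ → ℂ) : Prop :=
  DifferentiableOn ℂ F (Metric.ball 0 1) ∧
    BddAbove (Set.range fun r : Set.Ico (0 : ℝ) 1 =>
      (1 / (2 * π)) * ∫ t in (0:ℝ)..(2 * π), ‖F (((r : ℝ) : ℂ) * bp t)‖ ^ 2)

/-- The squared `H²(𝔻)` norm, `sup_{0≤r<1} (1/2π)∫₀^{2π} ‖F(r e^{it})‖² dt`, which equals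
the squared `L²(𝕋)` norm of the boundary values of `F`. -/
def H2NormSq (F : ℂ → ℂ) : ℝ :=
  ⨆ r : Set.Ico (0 : ℝ) 1,
    (1 / (2 * π)) * ∫ t in (0:ℝ)..(2 * π), ‖F (((r : ℝ) : ℂ) * bp t)‖ ^ 2

theorem orth (k : ℤ) (hk : k ≠ 0) : ∫ t in (0:ℝ)..(2*π), Complex.exp (Complex.I * t * k) = 0 := by
  have h : (Complex.I * k) ≠ 0 := by simp [Complex.I_ne_zero, hk]
  have h2 : ∀ t : ℝ, Complex.I * t * k = Complex.I * k * t := by intro t; ring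
  simp only [h2]
  rw [integral_exp_mul_complex h]
  have : Complex.exp (Complex.I * k * (2*π)) = 1 := by
    rw [show Complex.I * k * (2*π) = k * (2 * π * Complex.I) by ring]
    exact Complex.exp_int_mul_two_pi_mul_I k
  simp [this]

theorem orth' (n m : ℕ) : (∫ t in (0:ℝ)..(2*π), Complex.exp (Complex.I * t * n) * Complex.exp (-(Complex.I * t * m)))
    = if n = m then ((2*π : ℝ) : ℂ) else 0 := by
  have : ∀ t : ℝ, Complex.exp (Complex.I * t * n) * Complex.exp (-(Complex.I * t * m))
      = Complex.exp (Complex.I * t * (((n : ℤ) - (m : ℤ) : ℤ) : ℂ)) := by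
    intro t; rw [← Complex.exp_add]; congr 1; push_cast; ring
  simp only [this]
  by_cases h : n = m
  · subst h; simp
  · have hk : (n : ℤ) - (m : ℤ) ≠ 0 := sub_ne_zero.2 (by exact_mod_cast h)
    rw [orth _ hk]; simp [h]

theorem conj_mul_self_eq (z : ℂ) : (starRingEnd ℂ) z * z = ((‖z‖^2 : ℝ) : ℂ) := by
  rw [mul_comm, Complex.mul_conj]
  norm_cast
  simp [← Complex.sq_norm]

theorem normsub (z w : ℂ) : ‖z - w‖^2 = ‖z‖^2 + ‖w‖^2 - 2*(z * (starRingEnd ℂ) w).re := by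
  have h := Complex.normSq_sub z w
  simp only [← Complex.sq_norm] at *
  linarith

theorem contExp (c : ℂ) : Continuous fun t : ℝ => Complex.exp (c * t) :=
  Complex.continuous_exp.comp (continuous_const.mul Complex.continuous_ofReal)

theorem contExpN (n : ℕ) : Continuous fun t : ℝ => Complex.exp (Complex.I * t * n) := by
  have : ∀ t : ℝ, Complex.I * t * n = (Complex.I * n) * t := by intro t; ring
  simp only [this]; exact contExp _

theorem contExpN' (n : ℕ) : Continuous fun t : ℝ => Complex.exp (-(Complex.I * t * n)) := by
  have : ∀ t : ℝ, -(Complex.I * t * n) = (-(Complex.I * n)) * t := by intro t; ring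
  simp only [this]; exact contExp _

theorem bessel (u : ℝ → ℂ) (hu : Continuous u) (d : ℕ → ℂ) (N : ℕ)
    (hd : ∀ n < N, (∫ t in (0:ℝ)..(2*π), u t * Complex.exp (-(Complex.I * t * n))) = 2*π*(d n)) :
    ∑ n ∈ Finset.range N, ‖d n‖^2 ≤ (1/(2*π)) * ∫ t in (0:ℝ)..(2*π), ‖u t‖^2 := by
  set P : ℝ → ℂ := fun t => ∑ n ∈ Finset.range N, d n * Complex.exp (Complex.I * t * n) with hPdef
  have hP : Continuous P := by
    apply continuous_finset_sum; intro n _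
    exact continuous_const.mul (contExpN n)
  have hconjP : ∀ t : ℝ, (starRingEnd ℂ) (P t) = ∑ n ∈ Finset.range N, (starRingEnd ℂ) (d n) * Complex.exp (-(Complex.I * t * n)) := by
    intro t
    rw [map_sum]
    refine Finset.sum_congr rfl fun n _ => ?_
    rw [map_mul, ← Complex.exp_conj]
    congr 1
    simp [Complex.ext_iff]
  have hiu2 : IntervalIntegrable (fun t => ‖u t‖^2) volume 0 (2*π) := ((hu.norm.pow 2)).intervalIntegrable _ _
  have hiP2 : IntervalIntegrable (fun t => ‖P t‖^2) volume 0 (2*π) := ((hP.norm.pow 2)).intervalIntegrable _ _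
  have huP : Continuous fun t => u t * (starRingEnd ℂ) (P t) := hu.mul (Complex.continuous_conj.comp hP)
  have hiuP : IntervalIntegrable (fun t => (u t * (starRingEnd ℂ) (P t)).re) volume 0 (2*π) :=
    (Complex.continuous_re.comp huP).intervalIntegrable _ _
  set S : ℝ := ∑ n ∈ Finset.range N, ‖d n‖^2 with hS
  -- (A)
  have hA : (∫ t in (0:ℝ)..(2*π), u t * (starRingEnd ℂ) (P t)) = ((2*π*S : ℝ) : ℂ) := by
    have h1 : ∀ t : ℝ, u t * (starRingEnd ℂ) (P t) = ∑ n ∈ Finset.range N, (starRingEnd ℂ) (d n) * (u t * Complex.exp (-(Complex.I * t * n))) := by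
      intro t; rw [hconjP, Finset.mul_sum]; refine Finset.sum_congr rfl fun n _ => by ring
    simp only [h1]
    rw [intervalIntegral.integral_finset_sum]
    · have h2 : ∀ n ∈ Finset.range N,
          (∫ t in (0:ℝ)..(2*π), (starRingEnd ℂ) (d n) * (u t * Complex.exp (-(Complex.I * t * n))))
          = ((2*π*‖d n‖^2 : ℝ) : ℂ) := by
        intro n hn
        rw [intervalIntegral.integral_const_mul, hd n (Finset.mem_range.1 hn),
          show ((starRingEnd ℂ) (d n)) * (2*π*(d n)) = (2*(π:ℂ)) * ((starRingEnd ℂ) (d n) * d n) by ring,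
          conj_mul_self_eq]
        push_cast; ring
      rw [Finset.sum_congr rfl h2, ← Complex.ofReal_sum]
      push_cast [hS, Finset.mul_sum]
      ring_nf
    · intro n _
      exact (continuous_const.mul (hu.mul (contExpN' n))).intervalIntegrable _ _
  -- (B)
  have hB : (∫ t in (0:ℝ)..(2*π), P t * (starRingEnd ℂ) (P t)) = ((2*π*S : ℝ) : ℂ) := by
    have h1 : ∀ t : ℝ, P t * (starRingEnd ℂ) (P t)
        = ∑ n ∈ Finset.range N, ∑ m ∈ Finset.range N,
            (d n * (starRingEnd ℂ) (d m)) * (Complex.exp (Complex.I * t * n) * Complex.exp (-(Complex.I * t * m))) := by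
      intro t
      rw [hconjP, hPdef]
      rw [Finset.sum_mul_sum]
      refine Finset.sum_congr rfl fun n _ => Finset.sum_congr rfl fun m _ => by ring
    simp only [h1]
    rw [intervalIntegral.integral_finset_sum]
    · have h2 : ∀ n ∈ Finset.range N,
          (∫ t in (0:ℝ)..(2*π), ∑ m ∈ Finset.range N,
            (d n * (starRingEnd ℂ) (d m)) * (Complex.exp (Complex.I * t * n) * Complex.exp (-(Complex.I * t * m))))
          = ((2*π*‖d n‖^2 : ℝ) : ℂ) := by
        intro n hn
        rw [intervalIntegral.integral_finset_sum]
        · have h3 : ∀ m ∈ Finset.range N,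
              (∫ t in (0:ℝ)..(2*π), (d n * (starRingEnd ℂ) (d m)) * (Complex.exp (Complex.I * t * n) * Complex.exp (-(Complex.I * t * m))))
              = if n = m then ((2*π*‖d n‖^2 : ℝ) : ℂ) else 0 := by
            intro m _
            rw [intervalIntegral.integral_const_mul, orth']
            by_cases h : n = m
            · subst h
              rw [if_pos rfl, if_pos rfl,
                show d n * (starRingEnd ℂ) (d n) * ((2*π:ℝ):ℂ) = ((2*(π:ℂ))) * ((starRingEnd ℂ) (d n) * d n) by push_cast; ring, conj_mul_self_eq]
              push_cast; ring
            · simp [h]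
          rw [Finset.sum_congr rfl h3, Finset.sum_ite_eq (Finset.range N) n (fun _ => ((2*π*‖d n‖^2 : ℝ):ℂ)), if_pos hn]
        · intro m _
          exact (continuous_const.mul ((contExpN n).mul (contExpN' m))).intervalIntegrable _ _
      rw [Finset.sum_congr rfl h2, ← Complex.ofReal_sum]
      push_cast [hS, Finset.mul_sum]
      ring_nf
    · intro n _
      apply Continuous.intervalIntegrable
      apply continuous_finset_sum; intro m _
      exact continuous_const.mul ((contExpN n).mul (contExpN' m))
  -- norms squared from complex products
  have hPnorm : ∀ t : ℝ, ‖P t‖^2 = (P t * (starRingEnd ℂ) (P t)).re := by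
    intro t
    rw [mul_comm, conj_mul_self_eq, Complex.ofReal_re]
  -- key nonneg integral
  have key : (0:ℝ) ≤ (∫ t in (0:ℝ)..(2*π), ‖u t‖^2) - 2*π*S := by
    have h0 : (0:ℝ) ≤ ∫ t in (0:ℝ)..(2*π), ‖u t - P t‖^2 := by
      apply intervalIntegral.integral_nonneg (by positivity)
      intro t _; positivity
    have heq : (∫ t in (0:ℝ)..(2*π), ‖u t - P t‖^2)
        = (∫ t in (0:ℝ)..(2*π), ‖u t‖^2) - 2*π*S := by
      have hpt : ∀ t : ℝ, ‖u t - P t‖^2 = ‖u t‖^2 + (P t * (starRingEnd ℂ) (P t)).re - 2*(u t * (starRingEnd ℂ) (P t)).re := by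
        intro t; rw [← hPnorm]; exact normsub _ _
      simp only [hpt]
      rw [intervalIntegral.integral_sub, intervalIntegral.integral_add hiu2, intervalIntegral.integral_const_mul]
      · have hre1 : (∫ t in (0:ℝ)..(2*π), (P t * (starRingEnd ℂ) (P t)).re) = 2*π*S := by
          have h := ContinuousLinearMap.intervalIntegral_comp_comm Complex.reCLM
            ((hP.mul (Complex.continuous_conj.comp hP)).intervalIntegrable (μ := volume) 0 (2*π))
          simp only [Complex.reCLM_apply, Function.comp_apply, Pi.mul_apply] at h
          rw [h, hB, Complex.ofReal_re]
        have hre2 : (∫ t in (0:ℝ)..(2*π), (u t * (starRingEnd ℂ) (P t)).re) = 2*π*S := by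
          have h := ContinuousLinearMap.intervalIntegral_comp_comm Complex.reCLM
            (huP.intervalIntegrable (μ := volume) 0 (2*π))
          simp only [Complex.reCLM_apply, Function.comp_apply] at h
          rw [h, hA, Complex.ofReal_re]
        rw [hre1, hre2]; ring
      · exact (Complex.continuous_re.comp (hP.mul (Complex.continuous_conj.comp hP))).intervalIntegrable _ _
      · exact hiu2.add ((Complex.continuous_re.comp (hP.mul (Complex.continuous_conj.comp hP))).intervalIntegrable _ _)
      · exact hiuP.const_mul 2
    linarith [heq ▸ h0]
  have h2pi : (0:ℝ) < 2*π := by positivity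
  calc S = (1/(2*π)) * (2*π*S) := by field_simp
  _ ≤ (1/(2*π)) * ∫ t in (0:ℝ)..(2*π), ‖u t‖^2 := by
      apply mul_le_mul_of_nonneg_left (by linarith) (by positivity)


theorem coeffInt (F : ℂ → ℂ) (hF1 : DifferentiableOn ℂ F (Metric.ball 0 1)) {r : ℝ}
    (hr0 : 0 < r) (hr1 : r < 1) (n : ℕ) :
    (∫ t in (0:ℝ)..(2*π), F ((r:ℂ) * Complex.exp (Complex.I * t)) * Complex.exp (-(Complex.I * t * n)))
      = 2*π*(((cauchyPowerSeries F 0 r).coeff n) * (r:ℂ)^n) := by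
  have happ := cauchyPowerSeries_apply F 0 r n 1
  set J := ∫ t in (0:ℝ)..(2*π), F ((r:ℂ) * Complex.exp (Complex.I * t)) * Complex.exp (-(Complex.I * t * n)) with hJ
  have r0 : (r:ℂ) ≠ 0 := by exact_mod_cast hr0.ne'
  have hcirc : (∮ z in C(0, r), (1 / (z - 0)) ^ n • (z - 0)⁻¹ • F z)
      = (Complex.I * ((r:ℂ)⁻¹)^n) * J := by
    rw [circleIntegral]
    have hpt : ∀ t : ℝ, (deriv (circleMap 0 r) t) • ((1 / (circleMap 0 r t - 0)) ^ n • (circleMap 0 r t - 0)⁻¹ • F (circleMap 0 r t))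
        = (Complex.I * ((r:ℂ)⁻¹)^n) * (F ((r:ℂ) * Complex.exp (Complex.I * t)) * Complex.exp (-(Complex.I * t * n))) := by
      intro t
      have e0 : Complex.exp (Complex.I * t) ≠ 0 := Complex.exp_ne_zero _
      have hmap : circleMap 0 r t = (r:ℂ) * Complex.exp (Complex.I * t) := by
        simp only [circleMap, zero_add]
        rw [mul_comm (t:ℂ) Complex.I]
      have hinv : (Complex.exp (Complex.I * t))⁻¹ ^ n = Complex.exp (-(Complex.I * t * n)) := by
        rw [← Complex.exp_neg, ← Complex.exp_nat_mul]
        congr 1; ring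
      rw [deriv_circleMap]
      simp only [hmap, sub_zero, smul_eq_mul]
      rw [one_div, mul_inv, mul_pow, hinv]
      field_simp
    simp only [hpt]
    rw [intervalIntegral.integral_const_mul]
  rw [hcirc, smul_eq_mul] at happ
  have hI : (2 * (π:ℂ) * Complex.I) ≠ 0 := by
    simp [Complex.I_ne_zero, Real.pi_ne_zero]
  have hco : (cauchyPowerSeries F 0 r).coeff n = (2 * (π:ℂ) * Complex.I)⁻¹ * (Complex.I * ((r:ℂ)⁻¹)^n * J) := by
    rw [FormalMultilinearSeries.coeff, ← happ]
    norm_num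
  rw [hco]
  field_simp
  ring
  rw [mul_assoc, ← mul_pow, mul_inv_cancel₀ r0, one_pow, mul_one]


theorem tsum_cs (g h : ℕ → ℝ) (hg : ∀ n, 0 ≤ g n) (hh : ∀ n, 0 ≤ h n)
    (Hg : Summable fun n => g n^2) (Hh : Summable fun n => h n^2) :
    Summable (fun n => g n * h n) ∧
      (∑' n, g n * h n) ≤ Real.sqrt (∑' n, g n^2) * Real.sqrt (∑' n, h n^2) := by
  have hsum : Summable fun n => g n * h n := by
    apply Summable.of_nonneg_of_le (fun n => mul_nonneg (hg n) (hh n))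
      (fun n => ?_) ((Hg.add Hh).mul_left (1/2))
    nlinarith [sq_nonneg (g n - h n)]
  refine ⟨hsum, ?_⟩
  apply Real.tsum_le_of_sum_range_le (fun n => mul_nonneg (hg n) (hh n))
  intro N
  have hcs := Finset.sum_mul_sq_le_sq_mul_sq (Finset.range N) g h
  have h1 : ∑ n ∈ Finset.range N, g n ^ 2 ≤ ∑' n, g n ^ 2 :=
    Hg.sum_le_tsum _ (fun n _ => sq_nonneg _)
  have h2 : ∑ n ∈ Finset.range N, h n ^ 2 ≤ ∑' n, h n ^ 2 :=
    Hh.sum_le_tsum _ (fun n _ => sq_nonneg _)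
  have h3 : (∑ n ∈ Finset.range N, g n * h n)^2 ≤ (∑' n, g n ^ 2) * (∑' n, h n ^ 2) := by
    calc (∑ n ∈ Finset.range N, g n * h n)^2
        ≤ (∑ n ∈ Finset.range N, g n ^ 2) * ∑ n ∈ Finset.range N, h n ^ 2 := hcs
    _ ≤ (∑' n, g n ^ 2) * (∑' n, h n ^ 2) := by
        exact mul_le_mul h1 h2 (Finset.sum_nonneg fun n _ => sq_nonneg _)
          (tsum_nonneg fun n => sq_nonneg _)
  rw [← Real.sqrt_mul_self (Finset.sum_nonneg fun n _ => mul_nonneg (hg n) (hh n)),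
    ← Real.sqrt_mul (tsum_nonneg fun n => sq_nonneg _)]
  exact Real.sqrt_le_sqrt (by nlinarith)

set_option maxHeartbeats 1000000 in
theorem decay (F : ℂ → ℂ) (hF : IsH2D F) {ε : ℝ} (hε : 0 < ε) :
    ∃ r : ℝ, 0 ≤ r ∧ r < 1 ∧ ∀ a : ℂ, ‖a‖ < 1 → r ≤ ‖a‖ →
      (1 - ‖a‖^2) * ‖F a‖^2 < ε := by
  obtain ⟨hd, hbdd⟩ := hF
  obtain ⟨B, hB⟩ := hbdd
  rw [mem_upperBounds] at hB
  -- power series on every ball of radius < 1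
  have hps : ∀ r : ℝ, 0 < r → r < 1 →
      HasFPowerSeriesOnBall F (cauchyPowerSeries F 0 r) 0 ((r.toNNReal : ℝ≥0∞)) := by
    intro r hr0 hr1
    have hsub : Metric.closedBall (0:ℂ) (r.toNNReal : ℝ) ⊆ Metric.ball 0 1 := by
      rw [Real.coe_toNNReal r hr0.le]
      exact Metric.closedBall_subset_ball hr1
    have h := (hd.mono hsub).hasFPowerSeriesOnBall (Real.toNNReal_pos.mpr hr0)
    rwa [Real.coe_toNNReal r hr0.le] at h
  set p := cauchyPowerSeries F 0 (1/2 : ℝ) with hp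
  set c : ℕ → ℂ := fun n => p.coeff n with hc
  have hpeq : ∀ r : ℝ, 0 < r → r < 1 → cauchyPowerSeries F 0 r = p := fun r h0 h1 =>
    (hps r h0 h1).hasFPowerSeriesAt.eq_formalMultilinearSeries
      ((hps (1/2) (by norm_num) (by norm_num)).hasFPowerSeriesAt)
  -- series representation on the disc
  have hrep : ∀ a : ℂ, ‖a‖ < 1 → HasSum (fun n => c n * a^n) (F a) := by
    intro a ha
    set r : ℝ := (1 + ‖a‖)/2 with hrdef
    have hr0 : 0 < r := by positivity
    have hr1 : r < 1 := by rw [hrdef]; linarith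
    have har : ‖a‖ < r := by rw [hrdef]; linarith
    have hmem : a ∈ Metric.eball (0:ℂ) ((r.toNNReal : ℝ≥0∞)) := by
      rw [Metric.mem_eball, edist_zero_right]
      have h' : ‖a‖₊ < r.toNNReal := by
        rw [← norm_toNNReal]
        exact (Real.toNNReal_lt_toNNReal_iff hr0).2 har
      exact_mod_cast h'
    have h := (hps r hr0 hr1).hasSum_sub (y := a) (by simpa using hmem)
    rw [hpeq r hr0 hr1] at h
    simp only [sub_zero, FormalMultilinearSeries.apply_eq_pow_smul_coeff, smul_eq_mul] at h
    convert h using 2 with n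
    · rfl
    ring
  -- continuity on circles
  have hcont : ∀ r : ℝ, 0 < r → r < 1 →
      Continuous fun t : ℝ => F ((r:ℂ) * Complex.exp (Complex.I * t)) := by
    intro r h0 h1
    apply hd.continuousOn.comp_continuous
      (continuous_const.mul (contExp Complex.I))
    intro t
    rw [Metric.mem_ball, dist_zero_right, Pi.mul_apply, norm_mul, Complex.norm_real]
    have : ‖Complex.exp (Complex.I * t)‖ = 1 := by
      rw [Complex.norm_exp]
      simp
    rw [this, mul_one, Real.norm_eq_abs, abs_of_pos h0]
    exact h1
  -- Bessel bound for each r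
  have hBesselSum : ∀ N : ℕ, ∀ r : ℝ, 0 < r → r < 1 →
      ∑ n ∈ Finset.range N, ‖c n‖^2 * (r^n)^2 ≤ B := by
    intro N r h0 h1
    have hb := bessel (fun t => F ((r:ℂ) * Complex.exp (Complex.I * t)))
      (hcont r h0 h1) (fun n => c n * (r:ℂ)^n) N (fun n _ => by
        rw [coeffInt F hd h0 h1 n, hpeq r h0 h1])
    have hmem : (1/(2*π)) * (∫ t in (0:ℝ)..(2*π), ‖F ((r:ℂ) * Complex.exp (Complex.I * t))‖^2) ≤ B := by
      apply hB
      exact ⟨⟨r, h0.le, h1⟩, rfl⟩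
    refine le_trans (le_trans (le_of_eq ?_) hb) hmem
    refine Finset.sum_congr rfl fun n _ => ?_
    rw [norm_mul, mul_pow, norm_pow, Complex.norm_real, Real.norm_eq_abs, abs_of_pos h0]
  -- let r → 1
  have hsum1 : ∀ N : ℕ, ∑ n ∈ Finset.range N, ‖c n‖^2 ≤ B := by
    intro N
    set φ : ℝ → ℝ := fun r => ∑ n ∈ Finset.range N, ‖c n‖^2 * (r^n)^2 with hφ
    have hφc : Continuous φ := by
      apply continuous_finset_sum
      exact fun n _ => continuous_const.mul ((continuous_pow n).pow 2)
    have hne : (𝓝[Set.Ioo (0:ℝ) 1] 1).NeBot := right_nhdsWithin_Ioo_neBot one_pos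
    have hlim : Tendsto φ (𝓝[Set.Ioo (0:ℝ) 1] 1) (𝓝 (φ 1)) :=
      (hφc.tendsto 1).mono_left nhdsWithin_le_nhds
    have hev : ∀ᶠ r in 𝓝[Set.Ioo (0:ℝ) 1] 1, φ r ≤ B :=
      eventually_mem_nhdsWithin.mono (fun r hr => hBesselSum N r hr.1 hr.2)
    have := le_of_tendsto hlim hev
    simpa [hφ] using this
  have hsummable : Summable fun n => ‖c n‖^2 :=
    summable_of_sum_range_le (fun n => sq_nonneg _) hsum1
  -- choose N with small tail
  have htail : Tendsto (fun N => ∑' n, ‖c (n + N)‖^2) atTop (𝓝 0) := by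
    exact tendsto_sum_nat_add fun n => ‖c n‖^2
  obtain ⟨N, hN⟩ := (htail.eventually (eventually_lt_nhds (show (0:ℝ) < ε/4 by linarith))).exists
  set T : ℝ := ∑' n, ‖c (n + N)‖^2 with hT
  have hT0 : 0 ≤ T := tsum_nonneg fun n => sq_nonneg _
  set H : ℝ := ∑ n ∈ Finset.range N, ‖c n‖ with hH
  have hH0 : 0 ≤ H := Finset.sum_nonneg fun n _ => norm_nonneg _
  set δ : ℝ := min (1/2) (ε/(4*(H^2+1))) with hδ
  have hδ0 : 0 < δ := lt_min (by norm_num) (by positivity)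
  have hδ1 : δ ≤ 1/2 := min_le_left _ _
  have hδ2 : δ ≤ ε/(4*(H^2+1)) := min_le_right _ _
  clear_value T H δ
  refine ⟨Real.sqrt (1 - δ), Real.sqrt_nonneg _, ?_, ?_⟩
  · have h1 : Real.sqrt (1-δ) < Real.sqrt 1 := Real.sqrt_lt_sqrt (by linarith) (by linarith)
    rwa [Real.sqrt_one] at h1
  intro a ha har
  set q : ℝ := ‖a‖^2 with hq
  have hq0 : 0 ≤ q := sq_nonneg _
  have hq1 : q < 1 := by
    have := norm_nonneg a
    nlinarith
  have h1q : 0 < 1 - q := by linarith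
  have hqr : 1 - q ≤ δ := by
    have h2 : 1 - δ ≤ q := by
      have := Real.sq_sqrt (show (0:ℝ) ≤ 1 - δ by linarith)
      nlinarith [Real.sqrt_nonneg (1-δ)]
    linarith
  -- the splitting of the series
  have hsum2 : Summable fun n => c n * a^n := (hrep a ha).summable
  have hsplit : F a = (∑ n ∈ Finset.range N, c n * a^n) + ∑' n, c (n + N) * a^(n + N) := by
    rw [← (hrep a ha).tsum_eq, ← Summable.sum_add_tsum_nat_add N hsum2]
  -- head bound
  have hhead : ‖∑ n ∈ Finset.range N, c n * a^n‖ ≤ H := by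
    rw [hH]
    refine le_trans (norm_sum_le _ _) ?_
    apply Finset.sum_le_sum
    intro n _
    rw [norm_mul, norm_pow]
    calc ‖c n‖ * ‖a‖^n ≤ ‖c n‖ * 1 := by
          apply mul_le_mul_of_nonneg_left _ (norm_nonneg _)
          exact pow_le_one₀ (norm_nonneg a) ha.le
    _ = ‖c n‖ := mul_one _
  -- tail bound via Cauchy-Schwarz
  have hgsq : Summable fun n => (‖c (n + N)‖)^2 := by
    exact (summable_nat_add_iff N).2 hsummable
  have hq1' : q < 1 := hq1
  have hhsq : Summable fun n => (‖a‖^(n + N))^2 := by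
    have : ∀ n : ℕ, (‖a‖^(n + N))^2 = q^(n+N) := by
      intro n; rw [hq, ← pow_mul, ← pow_mul, mul_comm 2 (n+N)]
    simp only [this]
    exact (summable_nat_add_iff N).2 (summable_geometric_of_lt_one hq0 hq1)
  obtain ⟨hgh, hcs⟩ := tsum_cs (fun n => ‖c (n + N)‖) (fun n => ‖a‖^(n + N))
    (fun n => norm_nonneg _) (fun n => pow_nonneg (norm_nonneg _) _) hgsq hhsq
  have htails : Summable fun n => ‖c (n + N) * a^(n + N)‖ := by
    simpa only [norm_mul, norm_pow] using hgh
  have htsum_h : (∑' n, (‖a‖^(n + N))^2) ≤ (1 - q)⁻¹ := by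
    have hle : ∀ n : ℕ, (‖a‖^(n + N))^2 ≤ q^n := by
      intro n
      have h2 : (‖a‖^(n + N))^2 = q^(n+N) := by
        rw [hq, ← pow_mul, ← pow_mul, mul_comm (n+N) 2]
      rw [h2]
      exact pow_le_pow_of_le_one hq0 hq1.le (by omega)
    calc (∑' n, (‖a‖^(n + N))^2) ≤ ∑' n, q^n :=
          Summable.tsum_le_tsum hle hhsq (summable_geometric_of_lt_one hq0 hq1)
    _ = (1 - q)⁻¹ := tsum_geometric_of_lt_one hq0 hq1
  have htailb : ‖∑' n, c (n + N) * a^(n + N)‖ ≤ Real.sqrt T * Real.sqrt ((1 - q)⁻¹) := by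
    refine le_trans (norm_tsum_le_tsum_norm htails) ?_
    calc (∑' n, ‖c (n + N) * a^(n + N)‖) = ∑' n, ‖c (n + N)‖ * ‖a‖^(n + N) := by
          simp only [norm_mul, norm_pow]
    _ ≤ Real.sqrt (∑' n, ‖c (n + N)‖^2) * Real.sqrt (∑' n, (‖a‖^(n + N))^2) := hcs
    _ ≤ Real.sqrt T * Real.sqrt ((1 - q)⁻¹) := by
          rw [hT]
          apply mul_le_mul_of_nonneg_left (Real.sqrt_le_sqrt htsum_h) (Real.sqrt_nonneg _)
  -- assemble
  have hFa : ‖F a‖ ≤ H + Real.sqrt T * Real.sqrt ((1 - q)⁻¹) := by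
    rw [hsplit]
    exact le_trans (norm_add_le _ _) (add_le_add hhead htailb)
  have hss : Real.sqrt (1 - q) * Real.sqrt ((1 - q)⁻¹) = 1 := by
    rw [← Real.sqrt_mul h1q.le, mul_inv_cancel₀ h1q.ne', Real.sqrt_one]
  have hkey : (1 - q) * ‖F a‖^2 ≤ (Real.sqrt (1 - q) * H + Real.sqrt T)^2 := by
    have h1 : Real.sqrt (1 - q) * ‖F a‖ ≤ Real.sqrt (1 - q) * H + Real.sqrt T := by
      calc Real.sqrt (1 - q) * ‖F a‖
          ≤ Real.sqrt (1 - q) * (H + Real.sqrt T * Real.sqrt ((1 - q)⁻¹)) :=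
            mul_le_mul_of_nonneg_left hFa (Real.sqrt_nonneg _)
      _ = Real.sqrt (1 - q) * H + Real.sqrt T * (Real.sqrt (1 - q) * Real.sqrt ((1 - q)⁻¹)) := by ring
      _ = Real.sqrt (1 - q) * H + Real.sqrt T := by rw [hss, mul_one]
    have h2 : (Real.sqrt (1 - q) * ‖F a‖)^2 = (1 - q) * ‖F a‖^2 := by
      rw [mul_pow, Real.sq_sqrt h1q.le]
    rw [← h2]
    apply pow_le_pow_left₀ (by positivity) h1
  have hsqH : (Real.sqrt (1 - q) * H)^2 < ε/4 := by
    rw [mul_pow, Real.sq_sqrt h1q.le]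
    calc (1 - q) * H^2 ≤ δ * H^2 := mul_le_mul_of_nonneg_right hqr (sq_nonneg _)
    _ ≤ (ε/(4*(H^2+1))) * H^2 := mul_le_mul_of_nonneg_right hδ2 (sq_nonneg _)
    _ < ε/4 := by
        rw [div_mul_eq_mul_div, div_lt_div_iff₀ (by positivity) (by norm_num)]
        nlinarith
  have hsqT : (Real.sqrt T)^2 < ε/4 := by
    rw [Real.sq_sqrt hT0]
    exact hN
  calc (1 - ‖a‖^2) * ‖F a‖^2 = (1 - q) * ‖F a‖^2 := rfl
  _ ≤ (Real.sqrt (1 - q) * H + Real.sqrt T)^2 := hkey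
  _ < ε := by
      nlinarith [sq_nonneg (Real.sqrt (1-q) * H - Real.sqrt T),
        mul_nonneg (mul_nonneg (Real.sqrt_nonneg (1-q)) hH0) (Real.sqrt_nonneg T)]

/-- 1-D Maximal Selection Principle: `(1-|a|²)|f(a)|² = |⟨f, e_a⟩|²`
attains its supremum over `a ∈ 𝔻`. -/
theorem oneD_maximal_selection (F : ℂ → ℂ) (hF : IsH2D F) :
    ∃ a₁ : ℂ, ‖a₁‖ < 1 ∧ ∀ a : ℂ, ‖a‖ < 1 →
      (1 - ‖a‖ ^ 2) * ‖F a‖ ^ 2 ≤ (1 - ‖a₁‖ ^ 2) * ‖F a₁‖ ^ 2 := by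
  by_cases hzero : ∀ a : ℂ, ‖a‖ < 1 → F a = 0
  · refine ⟨0, by norm_num, fun a ha => ?_⟩
    rw [hzero a ha, hzero 0 (by norm_num)]
    simp
  push_neg at hzero
  obtain ⟨a₀, ha₀, hFa₀⟩ := hzero
  have hε : 0 < (1 - ‖a₀‖^2) * ‖F a₀‖^2 := by
    have h1 : 0 < 1 - ‖a₀‖^2 := by nlinarith [norm_nonneg a₀]
    have h2 : 0 < ‖F a₀‖ := norm_pos_iff.2 hFa₀
    positivity
  obtain ⟨r, hr0, hr1, hr⟩ := decay F hF hε
  set R : ℝ := max r ‖a₀‖ with hR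
  have hR1 : R < 1 := max_lt hr1 ha₀
  have hR0 : 0 ≤ R := le_trans hr0 (le_max_left _ _)
  -- continuity of the functional on the closed ball
  have hsub : Metric.closedBall (0:ℂ) R ⊆ Metric.ball 0 1 :=
    Metric.closedBall_subset_ball hR1
  have hFc : ContinuousOn F (Metric.closedBall (0:ℂ) R) :=
    (hF.1.continuousOn).mono hsub
  have hgc : ContinuousOn (fun a : ℂ => (1 - ‖a‖^2) * ‖F a‖^2) (Metric.closedBall (0:ℂ) R) := by
    apply ContinuousOn.mul
    · exact (continuous_const.sub ((continuous_norm).pow 2)).continuousOn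
    · exact (hFc.norm.pow 2)
  have hcomp : IsCompact (Metric.closedBall (0:ℂ) R) := isCompact_closedBall _ _
  obtain ⟨a₁, ha₁mem, ha₁max⟩ := hcomp.exists_isMaxOn
    ⟨0, Metric.mem_closedBall.2 (by rw [dist_zero_right]; simpa using hR0)⟩ hgc
  have ha₁R : ‖a₁‖ ≤ R := by
    have := Metric.mem_closedBall.1 ha₁mem
    rwa [dist_zero_right] at this
  have ha₁ : ‖a₁‖ < 1 := lt_of_le_of_lt ha₁R hR1
  refine ⟨a₁, ha₁, fun a ha => ?_⟩
  by_cases hcase : ‖a‖ ≤ R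
  · exact ha₁max (Metric.mem_closedBall.2 (by rwa [dist_zero_right]))
  · push_neg at hcase
    have h1 : (1 - ‖a‖^2) * ‖F a‖^2 < (1 - ‖a₀‖^2) * ‖F a₀‖^2 :=
      hr a ha (le_trans (le_max_left _ _) hcase.le)
    have h2 : (1 - ‖a₀‖^2) * ‖F a₀‖^2 ≤ (1 - ‖a₁‖^2) * ‖F a₁‖^2 :=
      ha₁max (Metric.mem_closedBall.2 (by rw [dist_zero_right]; exact le_max_right r ‖a₀‖))
    linarith
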